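/- The signature of the time-joined path of a time series {(t_i, r_i)}_{i=m}^n equals exp(r_m e_2) ⊗ ⨂_{i=m}^{n-1} (exp((t_{i+1}−t_i) e_1) ⊗ exp((r_{i+1}−r_i) e_2)) in T((ℝ^2)). -/

import Mathlib

open MeasureTheory Set

/-- Iterated integral of a path against its derivative; the head letter is integrated
outermost (so this corresponds to the reversed word). -/
noncomputable def iterInt {d : ℕ} (X : ℝ → Fin d → ℝ) (a : ℝ) : List (Fin d) → ℝ → ℝ
  | [], _ => 1
  | i :: I, b => ∫ u in a..b, iterInt X a I u * deriv (fun s => X s i) u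

/-- Coordinate iterated integral `π^I(S(X))` over `[a,b]` for the word `I = (i₁,…,iₙ)`
(innermost integration first). -/
noncomputable def sigCoord {d : ℕ} (X : ℝ → Fin d → ℝ) (a b : ℝ) (I : List (Fin d)) : ℝ :=
  iterInt X a I.reverse b

/-- The signature of a path over `[a,b]`, as the family of its coordinate iterated
integrals indexed by words; this represents an element of the tensor algebra `T((ℝ^d))`. -/
noncomputable def Sig {d : ℕ} (X : ℝ → Fin d → ℝ) (a b : ℝ) : List (Fin d) → ℝ :=
  fun I => sigCoord X a b I

/-- The product of the tensor algebra `T((ℝ^d))` in coordinates. -/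
noncomputable def tmul {d : ℕ} (x y : List (Fin d) → ℝ) : List (Fin d) → ℝ :=
  fun w => ∑ k ∈ Finset.range (w.length + 1), x (w.take k) * y (w.drop k)

/-- The unit of the tensor algebra. -/
def tunit {d : ℕ} : List (Fin d) → ℝ := fun w => if w = [] then 1 else 0

/-- The tensor exponential `exp(v) = Σ v^{⊗n}/n!` in coordinates. -/
noncomputable def texp {d : ℕ} (v : Fin d → ℝ) : List (Fin d) → ℝ :=
  fun w => (w.map v).prod / w.length.factorial

/-- The multiset of shuffles of two words. -/
def shuffles {α : Type*} : List α → List α → Multiset (List α)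
  | [], v => {v}
  | u, [] => {u}
  | a :: u, b :: v => ((shuffles u (b :: v)).map (a :: ·)) + ((shuffles (a :: u) v).map (b :: ·))
  termination_by u v => u.length + v.length

/-- `x` is in the range of the signature map on continuous bounded-variation paths. -/
def IsSignature {d : ℕ} (x : List (Fin d) → ℝ) : Prop :=
  ∃ (X : ℝ → Fin d → ℝ) (a b : ℝ), a ≤ b ∧ ContinuousOn X (Set.Icc a b) ∧
    BoundedVariationOn X (Set.Icc a b) ∧ x = Sig X a b

/-- Evaluation of a (finitely supported) linear form on `T((ℝ^d))`. -/
noncomputable def formEval {d : ℕ} (f : List (Fin d) →₀ ℝ) (x : List (Fin d) → ℝ) : ℝ :=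
  f.sum fun w c => c * x w

/-- The shuffle product of two linear forms, extended bilinearly from words. -/
noncomputable def shuffleForm {d : ℕ} (f g : List (Fin d) →₀ ℝ) : List (Fin d) →₀ ℝ :=
  f.sum fun u cu => g.sum fun v cv =>
    (cu * cv) • ((shuffles u v).map fun w => Finsupp.single w (1 : ℝ)).sum

section algebra
variable {d : ℕ}

lemma tmul_tunit (x : List (Fin d) → ℝ) : tmul x tunit = x := by
  funext w
  unfold tmul tunit
  rw [Finset.sum_eq_single w.length]
  · simp
  · intro k hk hne
    simp only [Finset.mem_range] at hk
    have : w.drop k ≠ [] := by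
      simp [List.drop_eq_nil_iff]
      omega
    simp [this]
  · intro h
    simp at h

lemma tunit_tmul (x : List (Fin d) → ℝ) : tmul tunit x = x := by
  funext w
  unfold tmul tunit
  rw [Finset.sum_eq_single 0]
  · simp
  · intro k hk hne
    have hw : w.take k ≠ [] := by
      rw [Ne, List.take_eq_nil_iff]
      rintro (h | h)
      · exact hne h
      · subst h; simp only [List.length_nil, Finset.mem_range] at hk; omega
    simp [hw]
  · intro h
    simp at h

lemma tmul_assoc (x y z : List (Fin d) → ℝ) : tmul (tmul x y) z = tmul x (tmul y z) := by
  funext w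
  unfold tmul
  simp only [Finset.sum_mul, Finset.mul_sum]
  rw [Finset.sum_comm' (t' := Finset.range (w.length+1))
    (s' := fun j => Finset.Icc j w.length) (f := fun k j =>
      x ((w.take k).take j) * y ((w.take k).drop j) * z (w.drop k))]
  · refine Finset.sum_congr rfl fun j hj => ?_
    simp only [Finset.mem_range] at hj
    have hj' : j ≤ w.length := by omega
    rw [show Finset.Icc j w.length = Finset.Ico j (w.length+1) from (Finset.Ico_add_one_right_eq_Icc _ _).symm,
      Finset.sum_Ico_eq_sum_range]
    have hlen : (w.drop j).length = w.length - j := by simp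
    rw [show w.length + 1 - j = (w.drop j).length + 1 by omega]
    refine Finset.sum_congr rfl fun k hk => ?_
    simp only [Finset.mem_range] at hk
    have h1 : (w.take (j + k)).take j = w.take j := by
      rw [List.take_take]; congr 1; omega
    have h2 : (w.take (j + k)).drop j = (w.drop j).take k := by
      rw [List.drop_take]; congr 1; omega
    have h3 : w.drop (j + k) = (w.drop j).drop k := by
      rw [List.drop_drop]
    rw [h1, h2, h3]; ring
  · intro k j
    simp only [Finset.mem_range, Finset.mem_Icc, List.length_take]
    omega

lemma foldr_tmul_concat (L : List (List (Fin d) → ℝ)) (s : List (Fin d) → ℝ) :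
    (L ++ [s]).foldr tmul tunit = tmul (L.foldr tmul tunit) s := by
  induction L with
  | nil => simp [tunit_tmul, tmul_tunit]
  | cons a L ih => simp only [List.cons_append, List.foldr_cons, ih, tmul_assoc]

end algebra

section analysis
variable {d : ℕ}

lemma iterInt_nil {X : ℝ → Fin d → ℝ} {a u : ℝ} : iterInt X a [] u = 1 := rfl

lemma iterInt_cons {X : ℝ → Fin d → ℝ} {a u : ℝ} {i : Fin d} {I : List (Fin d)} :
    iterInt X a (i :: I) u = ∫ v in a..u, iterInt X a I v * deriv (fun s => X s i) v := rfl

/-- Continuity and integrability package for iterated integrals. -/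
lemma iterInt_pkg (X : ℝ → Fin d → ℝ) (A B : ℝ) (hAB : A ≤ B)
    (hd : ∀ i, IntegrableOn (fun u => deriv (fun s => X s i) u) (Icc A B))
    (a : ℝ) (ha : a ∈ Icc A B) (J : List (Fin d)) :
    ContinuousOn (iterInt X a J) (Icc A B) ∧
      ∀ i, IntegrableOn (fun u => iterInt X a J u * deriv (fun s => X s i) u) (Icc A B) := by
  induction J with
  | nil =>
    constructor
    · exact continuousOn_const
    · intro i
      simpa only [iterInt_nil, one_mul] using hd i
  | cons i J ih =>
    have hint : IntervalIntegrable
        (fun u => iterInt X a J u * deriv (fun s => X s i) u) volume A B := by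
      apply MeasureTheory.IntegrableOn.intervalIntegrable
      rw [uIcc_of_le hAB]
      exact ih.2 i
    have hcont : ContinuousOn (iterInt X a (i :: J)) (Icc A B) := by
      have := intervalIntegral.continuousOn_primitive_interval' hint
        (by rw [uIcc_of_le hAB]; exact ha)
      rw [uIcc_of_le hAB] at this
      exact this
    refine ⟨hcont, fun i' => ?_⟩
    obtain ⟨C, hC⟩ := (isCompact_Icc : IsCompact (Icc A B)).exists_bound_of_continuousOn hcont
    exact (hd i').bdd_mul (hcont.aestronglyMeasurable measurableSet_Icc)
      ((ae_restrict_iff' measurableSet_Icc).2 (Filter.Eventually.of_forall hC))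

/-- Chen's identity, iterated-integral form. -/
lemma chen_iter (X : ℝ → Fin d → ℝ) (A B : ℝ) (hAB : A ≤ B)
    (hd : ∀ i, IntegrableOn (fun u => deriv (fun s => X s i) u) (Icc A B))
    (a c : ℝ) (ha : a ∈ Icc A B) (hc : c ∈ Icc A B) (hac : a ≤ c)
    (J : List (Fin d)) : ∀ u ∈ Icc c B,
    iterInt X a J u = ∑ k ∈ Finset.range (J.length + 1),
      iterInt X c (J.take k) u * iterInt X a (J.drop k) c := by
  induction J with
  | nil => intro u hu; simp [iterInt_nil]
  | cons i J ih =>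
    intro u hu
    have hcB : (c : ℝ) ∈ Icc A B := hc
    have huB : u ∈ Icc A B := ⟨le_trans hcB.1 hu.1, hu.2⟩
    have hIcc_sub : Icc c u ⊆ Icc A B := Icc_subset_Icc hcB.1 hu.2
    have hint : ∀ (b₁ b₂ : ℝ), b₁ ∈ Icc A B → b₂ ∈ Icc A B → IntervalIntegrable
        (fun v => iterInt X a J v * deriv (fun s => X s i) v) volume b₁ b₂ := by
      intro b₁ b₂ h1 h2
      apply MeasureTheory.IntegrableOn.intervalIntegrable
      exact ((iterInt_pkg X A B hAB hd a ha J).2 i).mono_set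
        (uIcc_subset_Icc h1 h2)
    rw [iterInt_cons, ← intervalIntegral.integral_add_adjacent_intervals
      (hint a c ha hc) (hint c u hc huB)]
    have key : (∫ v in c..u, iterInt X a J v * deriv (fun s => X s i) v)
        = ∑ k ∈ Finset.range (J.length + 1),
          iterInt X a (J.drop k) c * iterInt X c (i :: J.take k) u := by
      rw [intervalIntegral.integral_congr (g := fun v =>
          ∑ k ∈ Finset.range (J.length + 1),
            iterInt X a (J.drop k) c * (iterInt X c (J.take k) v * deriv (fun s => X s i) v))]
      · rw [intervalIntegral.integral_finset_sum]
        · refine Finset.sum_congr rfl fun k _ => ?_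
          rw [intervalIntegral.integral_const_mul, iterInt_cons]
        · intro k _
          apply IntervalIntegrable.const_mul
          apply MeasureTheory.IntegrableOn.intervalIntegrable
          exact ((iterInt_pkg X A B hAB hd c hc (J.take k)).2 i).mono_set
            (uIcc_subset_Icc hc huB)
      · intro v hv
        rw [uIcc_of_le hu.1] at hv
        have hv' : v ∈ Icc c B := ⟨hv.1, le_trans hv.2 hu.2⟩
        show iterInt X a J v * deriv (fun s => X s i) v = _
        rw [ih v hv', Finset.sum_mul]
        refine Finset.sum_congr rfl fun k _ => ?_
        ring
    rw [key]
    have hs := Finset.sum_range_succ' (fun k =>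
      iterInt X c ((i :: J).take k) u * iterInt X a ((i :: J).drop k) c) (J.length + 1)
    simp only [List.length_cons]
    rw [hs]
    simp only [List.take_succ_cons, List.drop_succ_cons, List.take_zero, List.drop_zero,
      iterInt_nil, one_mul]
    rw [add_comm]
    congr 1
    refine Finset.sum_congr rfl fun k _ => ?_
    ring

/-- Chen's identity, signature form. -/
lemma chen_sig (X : ℝ → Fin d → ℝ) (A B : ℝ) (hAB : A ≤ B)
    (hd : ∀ i, IntegrableOn (fun u => deriv (fun s => X s i) u) (Icc A B))
    (a c b : ℝ) (ha : a ∈ Icc A B) (hc : c ∈ Icc A B) (hb : b ∈ Icc A B)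
    (hac : a ≤ c) (hcb : c ≤ b) :
    Sig X a b = tmul (Sig X a c) (Sig X c b) := by
  funext w
  have h := chen_iter X A B hAB hd a c ha hc hac w.reverse b ⟨hcb, hb.2⟩
  show iterInt X a w.reverse b = _
  rw [h]
  unfold tmul Sig sigCoord
  have hlen : w.reverse.length = w.length := by simp
  rw [hlen]
  rw [← Finset.sum_range_reflect]
  refine Finset.sum_congr rfl fun j hj => ?_
  simp only [Finset.mem_range] at hj
  have hj' : j ≤ w.length := by omega
  have e1 : w.reverse.take (w.length + 1 - 1 - j) = (w.drop j).reverse := by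
    rw [List.reverse_drop, Nat.add_sub_cancel]
  have e2 : w.reverse.drop (w.length + 1 - 1 - j) = (w.take j).reverse := by
    rw [List.reverse_take, Nat.add_sub_cancel]
  rw [e1, e2]
  ring

end analysis

section segment
variable {d : ℕ}

lemma ae_ne_point (c : ℝ) : ∀ᵐ x : ℝ, x ≠ c := by
  rw [ae_iff]
  have : {x : ℝ | ¬ x ≠ c} = {c} := by ext x; simp
  rw [this]
  exact measure_singleton _

lemma seg_deriv_eq (X : ℝ → Fin d → ℝ) (a : ℝ) (p v : Fin d → ℝ)
    (h : ∀ s ∈ Icc a (a+1), ∀ i, X s i = p i + v i * (s - a)) (i : Fin d) :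
    ∀ x ∈ Ioo a (a+1), deriv (fun s => X s i) x = v i := by
  intro x hx
  have hev : (fun s => X s i) =ᶠ[nhds x] (fun s => p i + v i * (s - a)) := by
    filter_upwards [Ioo_mem_nhds hx.1 hx.2] with s hs
    exact h s (Ioo_subset_Icc_self hs) i
  rw [hev.deriv_eq]
  have hh : HasDerivAt (fun s => p i + v i * (s - a)) (v i) x := by
    simpa using (((hasDerivAt_id x).sub_const a).const_mul (v i)).const_add (p i)
  exact hh.deriv

lemma seg_iterInt (X : ℝ → Fin d → ℝ) (a : ℝ) (p v : Fin d → ℝ)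
    (h : ∀ s ∈ Icc a (a+1), ∀ i, X s i = p i + v i * (s - a)) :
    ∀ J : List (Fin d), ∀ u ∈ Icc a (a+1),
      iterInt X a J u = (J.map v).prod * (u - a) ^ J.length / J.length.factorial := by
  intro J
  induction J with
  | nil => intro u hu; simp [iterInt_nil]
  | cons i J ih =>
    intro u hu
    rw [iterInt_cons]
    have hae : ∀ᵐ x : ℝ, x ∈ Set.uIoc a u → iterInt X a J x * deriv (fun s => X s i) x
        = ((J.map v).prod * v i / J.length.factorial) * (x - a) ^ J.length := by
      filter_upwards [ae_ne_point (a+1)] with x hx1 hx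
      rw [uIoc_of_le hu.1] at hx
      have hxIcc : x ∈ Icc a (a+1) := ⟨hx.1.le, le_trans hx.2 hu.2⟩
      have hxIoo : x ∈ Ioo a (a+1) := ⟨hx.1, lt_of_le_of_ne hxIcc.2 hx1⟩
      rw [ih x hxIcc, seg_deriv_eq X a p v h i x hxIoo]
      ring
    rw [intervalIntegral.integral_congr_ae hae, intervalIntegral.integral_const_mul]
    have hpow : (∫ x in a..u, (x - a) ^ J.length)
        = (u - a) ^ (J.length + 1) / ((J.length : ℝ) + 1) := by
      rw [intervalIntegral.integral_comp_sub_right (fun x => x ^ J.length) a]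
      simp [integral_pow, sub_self]
    rw [hpow]
    simp only [List.map_cons, List.prod_cons, List.length_cons, Nat.factorial_succ]
    have h1 : (J.length.factorial : ℝ) ≠ 0 := Nat.cast_ne_zero.2 (Nat.factorial_ne_zero _)
    have h2 : ((J.length : ℝ) + 1) ≠ 0 := by positivity
    push_cast
    field_simp

lemma seg_sig (X : ℝ → Fin d → ℝ) (a : ℝ) (p v : Fin d → ℝ)
    (h : ∀ s ∈ Icc a (a+1), ∀ i, X s i = p i + v i * (s - a)) :
    Sig X a (a+1) = texp v := by
  funext w
  show iterInt X a w.reverse (a+1) = _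
  rw [seg_iterInt X a p v h w.reverse (a+1) ⟨by linarith, le_refl _⟩]
  unfold texp
  simp [List.map_reverse, List.prod_reverse, add_sub_cancel_left]

lemma seg_deriv_integrableOn (X : ℝ → Fin d → ℝ) (a : ℝ) (p v : Fin d → ℝ)
    (h : ∀ s ∈ Icc a (a+1), ∀ i, X s i = p i + v i * (s - a)) (i : Fin d) :
    IntegrableOn (fun u => deriv (fun s => X s i) u) (Icc a (a+1)) := by
  have hconst : IntegrableOn (fun _ : ℝ => v i) (Icc a (a+1)) :=
    integrableOn_const measure_Icc_lt_top.ne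
  apply hconst.congr
  have h1 : ∀ᵐ x : ℝ, x ∈ Icc a (a+1) → (fun _ : ℝ => v i) x = deriv (fun s => X s i) x := by
    filter_upwards [ae_ne_point a, ae_ne_point (a+1)] with x hxa hxb hx
    exact (seg_deriv_eq X a p v h i x
      ⟨lt_of_le_of_ne hx.1 (Ne.symm hxa), lt_of_le_of_ne hx.2 hxb⟩).symm
  exact (ae_restrict_iff' measurableSet_Icc).2 h1

end segment

/-- the signature of the time-joined path of a time series is the tensor
product of tensor exponentials of the successive increments. -/
theorem signature_time_joined (t r : ℕ → ℝ) (m n : ℕ) (hmn : m < n)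
    (R : ℝ → Fin 2 → ℝ)
    (hR1 : ∀ s ∈ Set.Icc (2*m : ℝ) (2*m+1), R s = ![t m, r m * (s - 2*m)])
    (hR2 : ∀ i, m ≤ i → i < n → ∀ s ∈ Set.Icc (2*i+1 : ℝ) (2*i+2),
      R s = ![t i + (t (i+1) - t i) * (s - (2*i+1)), r i])
    (hR3 : ∀ i, m ≤ i → i < n → ∀ s ∈ Set.Icc (2*i+2 : ℝ) (2*i+3),
      R s = ![t (i+1), r i + (r (i+1) - r i) * (s - (2*i+2))]) :
    Sig R (2*m) (2*n+1) = tmul (texp ![0, r m])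
      (((List.range (n - m)).map fun k =>
          tmul (texp ![t (m+k+1) - t (m+k), 0])
               (texp ![0, r (m+k+1) - r (m+k)])).foldr tmul tunit) := by
  have hmn' : (m:ℝ) ≤ n := by exact_mod_cast hmn.le
  have hAB : (2*(m:ℝ)) ≤ 2*(n:ℝ)+1 := by linarith
  have aff0 : ∀ s ∈ Icc (2*(m:ℝ)) (2*(m:ℝ)+1), ∀ i,
      R s i = ![t m, 0] i + ![0, r m] i * (s - 2*(m:ℝ)) := by
    intro s hs i
    rw [hR1 s hs]
    fin_cases i <;> simp
  have aff1 : ∀ k, m ≤ k → k < n → ∀ s ∈ Icc (2*(k:ℝ)+1) ((2*(k:ℝ)+1)+1), ∀ i,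
      R s i = ![t k, r k] i + ![t (k+1) - t k, 0] i * (s - (2*(k:ℝ)+1)) := by
    intro k h1 h2 s hs i
    have hs' : s ∈ Icc (2*(k:ℝ)+1) (2*(k:ℝ)+2) := ⟨hs.1, by have := hs.2; linarith⟩
    rw [hR2 k h1 h2 s hs']
    fin_cases i <;> simp
  have aff2 : ∀ k, m ≤ k → k < n → ∀ s ∈ Icc (2*(k:ℝ)+2) ((2*(k:ℝ)+2)+1), ∀ i,
      R s i = ![t (k+1), r k] i + ![0, r (k+1) - r k] i * (s - (2*(k:ℝ)+2)) := by
    intro k h1 h2 s hs i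
    have hs' : s ∈ Icc (2*(k:ℝ)+2) (2*(k:ℝ)+3) := ⟨hs.1, by have := hs.2; linarith⟩
    rw [hR3 k h1 h2 s hs']
    fin_cases i <;> simp
  have hd : ∀ i : Fin 2, IntegrableOn (fun u => deriv (fun s => R s i) u)
      (Icc (2*(m:ℝ)) (2*(n:ℝ)+1)) := by
    intro i
    have main : ∀ k, m ≤ k → k ≤ n → IntegrableOn (fun u => deriv (fun s => R s i) u)
        (Icc (2*(m:ℝ)) (2*(k:ℝ)+1)) := by
      intro k hk
      induction k, hk using Nat.le_induction with
      | base => exact fun _ => seg_deriv_integrableOn R _ _ _ aff0 i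
      | succ k hk ih =>
        intro hk1
        have hkn : k < n := hk1
        have hmk : (m:ℝ) ≤ k := by exact_mod_cast hk
        have i1 := ih hkn.le
        have i2 := seg_deriv_integrableOn R _ _ _ (aff1 k hk hkn) i
        have i3 := seg_deriv_integrableOn R _ _ _ (aff2 k hk hkn) i
        have e : (((k+1:ℕ)):ℝ) = (k:ℝ)+1 := by push_cast; ring
        rw [e]
        have hsets : Icc (2*(m:ℝ)) (2*((k:ℝ)+1)+1)
            = (Icc (2*(m:ℝ)) (2*(k:ℝ)+1) ∪ Icc (2*(k:ℝ)+1) (2*(k:ℝ)+2))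
              ∪ Icc (2*(k:ℝ)+2) (2*(k:ℝ)+3) := by
          rw [Icc_union_Icc_eq_Icc (by linarith) (by linarith),
            Icc_union_Icc_eq_Icc (by linarith) (by linarith)]
          congr 1
          ring
        rw [hsets]
        refine (i1.union ?_).union ?_
        · rw [show (2*(k:ℝ)+2) = (2*(k:ℝ)+1)+1 from by ring]; exact i2
        · rw [show (2*(k:ℝ)+3) = (2*(k:ℝ)+2)+1 from by ring]; exact i3
    exact main n hmn.le le_rfl
  have key : ∀ k, m ≤ k → k ≤ n → Sig R (2*(m:ℝ)) (2*(k:ℝ)+1)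
      = tmul (texp ![0, r m]) (((List.range (k - m)).map fun j =>
          tmul (texp ![t (m+j+1) - t (m+j), 0])
               (texp ![0, r (m+j+1) - r (m+j)])).foldr tmul tunit) := by
    intro k hk
    induction k, hk using Nat.le_induction with
    | base =>
      intro _
      rw [Nat.sub_self]
      simp only [List.range_zero, List.map_nil, List.foldr_nil]
      rw [tmul_tunit]
      exact seg_sig R (2*(m:ℝ)) ![t m, 0] ![0, r m] aff0
    | succ k hk ih =>
      intro hk1
      have hkn : k < n := hk1
      have hmk : (m:ℝ) ≤ k := by exact_mod_cast hk
      have hkn'' : (k:ℝ) + 1 ≤ n := by exact_mod_cast hkn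
      have hmem : ∀ x : ℝ, 2*(m:ℝ) ≤ x → x ≤ 2*(n:ℝ)+1 → x ∈ Icc (2*(m:ℝ)) (2*(n:ℝ)+1) :=
        fun x h1 h2 => ⟨h1, h2⟩
      have e : (((k+1:ℕ)):ℝ) = (k:ℝ)+1 := by push_cast; ring
      rw [e, show 2*((k:ℝ)+1)+1 = 2*(k:ℝ)+3 from by ring]
      rw [chen_sig R (2*(m:ℝ)) (2*(n:ℝ)+1) hAB hd (2*(m:ℝ)) (2*(k:ℝ)+1) (2*(k:ℝ)+3)
        (hmem _ le_rfl (by linarith)) (hmem _ (by linarith) (by linarith))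
        (hmem _ (by linarith) (by linarith)) (by linarith) (by linarith)]
      rw [chen_sig R (2*(m:ℝ)) (2*(n:ℝ)+1) hAB hd (2*(k:ℝ)+1) (2*(k:ℝ)+2) (2*(k:ℝ)+3)
        (hmem _ (by linarith) (by linarith)) (hmem _ (by linarith) (by linarith))
        (hmem _ (by linarith) (by linarith)) (by linarith) (by linarith)]
      have s1 : Sig R (2*(k:ℝ)+1) (2*(k:ℝ)+2) = texp ![t (k+1) - t k, 0] := by
        have h := seg_sig R (2*(k:ℝ)+1) ![t k, r k] ![t (k+1) - t k, 0] (aff1 k hk hkn)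
        rw [show (2*(k:ℝ)+1)+1 = 2*(k:ℝ)+2 from by ring] at h
        exact h
      have s2 : Sig R (2*(k:ℝ)+2) (2*(k:ℝ)+3) = texp ![0, r (k+1) - r k] := by
        have h := seg_sig R (2*(k:ℝ)+2) ![t (k+1), r k] ![0, r (k+1) - r k] (aff2 k hk hkn)
        rw [show (2*(k:ℝ)+2)+1 = 2*(k:ℝ)+3 from by ring] at h
        exact h
      rw [s1, s2, ih hkn.le]
      rw [show k + 1 - m = (k - m) + 1 from by omega, List.range_succ, List.map_append,
        List.map_cons, List.map_nil, foldr_tmul_concat,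
        show m + (k - m) = k from by omega]
      rw [tmul_assoc]
  exact key n hmn.le le_rfl
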